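/- Let c : ℝ → ℝ be continuously differentiable, let I = [0,T] with T > 0, and let x, V : I → ℝ be continuous. Suppose v, e : I → ℝ are differentiable and satisfy v'(t) = −v(t)² − e(t) and e'(t) = −e(t)·v(t) + c(x(t))·v(t) + c'(x(t))·V(t) on I. Define Q(t) = exp(∫₀ᵗ v(s) ds). Then Q(t) > 0 on I, Q(0) = 1, Q'(0) = v(0), Q''(0) = −e(0), and Q satisfies the linear equation Q'''(t) + c(x(t))·Q'(t) + c'(x(t))·V(t)·Q(t) = 0 on I. In particular, as long as the Riccati system has a finite solution, its linearization Q stays positive. -/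

import Mathlib

open Set

/-- If `v, e` solve the Riccati system `v' = -v² - e`,
`e' = -e v + c(x(t)) v + c'(x(t)) V(t)` on `[0,T]`, then
`Q t = exp (∫₀ᵗ v)` is positive, satisfies `Q 0 = 1`, `Q' 0 = v 0`,
`Q'' 0 = -e 0`, and solves the linear equation
`Q''' + c(x(t)) Q' + c'(x(t)) V(t) Q = 0` on `[0,T]`. -/
theorem riccati_to_radon_linearization
    (c : ℝ → ℝ) (hc : ContDiff ℝ 1 c)
    (T : ℝ) (hT : 0 < T)
    (x V : ℝ → ℝ)
    (hx : ContinuousOn x (Icc 0 T)) (hV : ContinuousOn V (Icc 0 T))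
    (v e : ℝ → ℝ)
    (hv : ∀ t ∈ Icc (0:ℝ) T,
      HasDerivWithinAt v (-(v t)^2 - e t) (Icc 0 T) t)
    (he : ∀ t ∈ Icc (0:ℝ) T,
      HasDerivWithinAt e
        (-(e t) * v t + c (x t) * v t + deriv c (x t) * V t) (Icc 0 T) t) :
    (∀ t ∈ Icc (0:ℝ) T, 0 < Real.exp (∫ s in (0:ℝ)..t, v s)) ∧
    Real.exp (∫ s in (0:ℝ)..(0:ℝ), v s) = 1 ∧
    ∃ Q1 Q2 Q3 : ℝ → ℝ,
      (∀ t ∈ Icc (0:ℝ) T,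
        HasDerivWithinAt (fun u => Real.exp (∫ s in (0:ℝ)..u, v s)) (Q1 t)
          (Icc 0 T) t) ∧
      (∀ t ∈ Icc (0:ℝ) T, HasDerivWithinAt Q1 (Q2 t) (Icc 0 T) t) ∧
      (∀ t ∈ Icc (0:ℝ) T, HasDerivWithinAt Q2 (Q3 t) (Icc 0 T) t) ∧
      Q1 0 = v 0 ∧ Q2 0 = -(e 0) ∧
      (∀ t ∈ Icc (0:ℝ) T,
        Q3 t + c (x t) * Q1 t
          + deriv c (x t) * V t * Real.exp (∫ s in (0:ℝ)..t, v s) = 0) := by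
  set Q : ℝ → ℝ := fun u => Real.exp (∫ s in (0:ℝ)..u, v s) with hQdef
  have hvcont : ContinuousOn v (Icc 0 T) := fun t ht => (hv t ht).continuousWithinAt
  -- derivative of Q
  have hQ : ∀ t ∈ Icc (0:ℝ) T, HasDerivWithinAt Q (v t * Q t) (Icc 0 T) t := by
    intro t ht
    have : Fact (t ∈ Icc (0:ℝ) T) := ⟨ht⟩
    have hint : IntervalIntegrable v MeasureTheory.volume 0 t := by
      apply ContinuousOn.intervalIntegrable
      apply hvcont.mono
      rw [uIcc_of_le ht.1]
      exact Icc_subset_Icc le_rfl ht.2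
    have hmeas : StronglyMeasurableAtFilter v (nhdsWithin t (Icc 0 T)) := by
      exact ⟨Icc 0 T, self_mem_nhdsWithin, (hvcont.mono le_rfl).aestronglyMeasurable measurableSet_Icc⟩
    have hFTC :
        HasDerivWithinAt (fun u => ∫ s in (0:ℝ)..u, v s) (v t) (Icc 0 T) t :=
      intervalIntegral.integral_hasDerivWithinAt_right hint hmeas (hvcont t ht)
    have := hFTC.exp
    simpa [Q, mul_comm] using this
  have hQpos : ∀ t ∈ Icc (0:ℝ) T, 0 < Q t := fun t _ => Real.exp_pos _
  have hQ0 : Q 0 = 1 := by simp [Q]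
  refine ⟨hQpos, hQ0, fun t => v t * Q t, fun t => -e t * Q t,
    fun t => -(c (x t) * v t + deriv c (x t) * V t) * Q t, hQ, ?_, ?_, ?_, ?_, ?_⟩
  · intro t ht
    have h1 : HasDerivWithinAt (fun y => v y * Q y) _ _ _ := (hv t ht).mul (hQ t ht)
    convert h1 using 1
    ring
  · intro t ht
    have h1 : HasDerivWithinAt (fun y => -e y * Q y)
      (-(-e t * v t + c (x t) * v t + deriv c (x t) * V t) * Q t + -e t * (v t * Q t)) _ _ := ((he t ht).neg).mul (hQ t ht)
    convert h1 using 1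
    ring
  · simp [hQ0]
  · simp [hQ0]
  · intro t ht
    have : Q t = Real.exp (∫ s in (0:ℝ)..t, v s) := rfl
    rw [← this]
    ring
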